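/- Let X₁, X₂ ⊆ ℂ be open sets and let g₁ : X₁ → ℂ and g₂ : X₂ → ℂ be holomorphic (DifferentiableOn ℂ). Set U := {(z₁, z₂) ∈ ℂ × ℂ : z₁ − I·z₂ ∈ X₁ and z₁ + I·z₂ ∈ X₂} and define f = (f₁, f₂) : U → ℂ × ℂ by f₁(z₁, z₂) = (g₁(z₁ − I·z₂) + g₂(z₁ + I·z₂))/2 and f₂(z₁, z₂) = I·(g₁(z₁ − I·z₂) − g₂(z₁ + I·z₂))/2. Then U is open, f is 𝕋-holomorphic on U, and its components' partial derivatives satisfy (∂f₁/∂z₁)(z₁, z₂) = (g₁′(z₁ − I·z₂) + g₂′(z₁ + I·z₂))/2 and (∂f₂/∂z₁)(z₁, z₂) = I·(g₁′(z₁ − I·z₂) − g₂′(z₁ + I·z₂))/2 for all (z₁, z₂) ∈ U. -/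

import Mathlib

/-- A function `f = (f₁, f₂) : U → ℂ × ℂ` is 𝕋-holomorphic (bicomplex holomorphic) on an open
set `U ⊆ ℂ × ℂ` if it is holomorphic on `U` as a map of two complex variables and its components
satisfy the complexified Cauchy–Riemann equations `∂f₁/∂z₁ = ∂f₂/∂z₂`, `∂f₂/∂z₁ = −∂f₁/∂z₂`. -/
def THolo (f : ℂ × ℂ → ℂ × ℂ) (U : Set (ℂ × ℂ)) : Prop :=
  DifferentiableOn ℂ f U ∧
  ∀ z ∈ U,
    fderiv ℂ (fun w => (f w).1) z (1, 0) = fderiv ℂ (fun w => (f w).2) z (0, 1) ∧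
    fderiv ℂ (fun w => (f w).2) z (1, 0) = -(fderiv ℂ (fun w => (f w).1) z (0, 1))

/-- If `g₁`, `g₂` are holomorphic on open sets `X₁`, `X₂ ⊆ ℂ` then
`f = g₁(P₁(·))e₁ + g₂(P₂(·))e₂` is 𝕋-holomorphic on
`U = {(z₁,z₂) : z₁ − I z₂ ∈ X₁, z₁ + I z₂ ∈ X₂}`, with the stated formula for its derivative. -/
theorem stmt2 (X₁ X₂ : Set ℂ) (hX₁ : IsOpen X₁) (hX₂ : IsOpen X₂)
    (g₁ g₂ : ℂ → ℂ) (hg₁ : DifferentiableOn ℂ g₁ X₁) (hg₂ : DifferentiableOn ℂ g₂ X₂) :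
    let U : Set (ℂ × ℂ) :=
      {z : ℂ × ℂ | z.1 - Complex.I * z.2 ∈ X₁ ∧ z.1 + Complex.I * z.2 ∈ X₂}
    let f : ℂ × ℂ → ℂ × ℂ := fun z =>
      ((g₁ (z.1 - Complex.I * z.2) + g₂ (z.1 + Complex.I * z.2)) / 2,
       Complex.I * (g₁ (z.1 - Complex.I * z.2) - g₂ (z.1 + Complex.I * z.2)) / 2)
    IsOpen U ∧ THolo f U ∧
    ∀ z ∈ U,
      fderiv ℂ (fun w => (f w).1) z (1, 0)
        = (deriv g₁ (z.1 - Complex.I * z.2) + deriv g₂ (z.1 + Complex.I * z.2)) / 2 ∧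
      fderiv ℂ (fun w => (f w).2) z (1, 0)
        = Complex.I * (deriv g₁ (z.1 - Complex.I * z.2) - deriv g₂ (z.1 + Complex.I * z.2)) / 2 := by
  intro U f
  set I := Complex.I
  -- linear maps
  set p₁ : ℂ × ℂ →L[ℂ] ℂ :=
    ContinuousLinearMap.fst ℂ ℂ ℂ - I • ContinuousLinearMap.snd ℂ ℂ ℂ with hp₁def
  set p₂ : ℂ × ℂ →L[ℂ] ℂ :=
    ContinuousLinearMap.fst ℂ ℂ ℂ + I • ContinuousLinearMap.snd ℂ ℂ ℂ with hp₂def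
  have hp₁app : ∀ w : ℂ × ℂ, p₁ w = w.1 - I * w.2 := by
    intro w; simp [hp₁def, smul_eq_mul]
  have hp₂app : ∀ w : ℂ × ℂ, p₂ w = w.1 + I * w.2 := by
    intro w; simp [hp₂def, smul_eq_mul]
  have hU : IsOpen U := by
    have : U = (fun z : ℂ × ℂ => z.1 - I * z.2) ⁻¹' X₁ ∩
        (fun z : ℂ × ℂ => z.1 + I * z.2) ⁻¹' X₂ := rfl
    rw [this]
    exact (hX₁.preimage (by fun_prop)).inter (hX₂.preimage (by fun_prop))
  -- pointwise derivative facts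
  have key : ∀ z ∈ U,
      HasFDerivAt (fun w : ℂ × ℂ => (g₁ (w.1 - I * w.2) + g₂ (w.1 + I * w.2)) / 2)
        ((2 : ℂ)⁻¹ • ((deriv g₁ (z.1 - I * z.2)) • p₁ + (deriv g₂ (z.1 + I * z.2)) • p₂)) z ∧
      HasFDerivAt (fun w : ℂ × ℂ => I * (g₁ (w.1 - I * w.2) - g₂ (w.1 + I * w.2)) / 2)
        ((I / 2) • ((deriv g₁ (z.1 - I * z.2)) • p₁ - (deriv g₂ (z.1 + I * z.2)) • p₂)) z := by
    intro z hz
    have h1 : HasDerivAt g₁ (deriv g₁ (z.1 - I * z.2)) (z.1 - I * z.2) :=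
      (hg₁.differentiableAt (hX₁.mem_nhds hz.1)).hasDerivAt
    have h2 : HasDerivAt g₂ (deriv g₂ (z.1 + I * z.2)) (z.1 + I * z.2) :=
      (hg₂.differentiableAt (hX₂.mem_nhds hz.2)).hasDerivAt
    have hP₁ : HasFDerivAt (fun w : ℂ × ℂ => w.1 - I * w.2) p₁ z := by
      have := p₁.hasFDerivAt (x := z)
      refine this.congr_of_eventuallyEq ?_
      filter_upwards with w using (hp₁app w).symm
    have hP₂ : HasFDerivAt (fun w : ℂ × ℂ => w.1 + I * w.2) p₂ z := by
      have := p₂.hasFDerivAt (x := z)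
      refine this.congr_of_eventuallyEq ?_
      filter_upwards with w using (hp₂app w).symm
    have c1 : HasFDerivAt (fun w : ℂ × ℂ => g₁ (w.1 - I * w.2))
        ((deriv g₁ (z.1 - I * z.2)) • p₁) z := h1.comp_hasFDerivAt z hP₁
    have c2 : HasFDerivAt (fun w : ℂ × ℂ => g₂ (w.1 + I * w.2))
        ((deriv g₂ (z.1 + I * z.2)) • p₂) z := h2.comp_hasFDerivAt z hP₂
    constructor
    · have := (c1.add c2).const_smul ((2 : ℂ)⁻¹)
      change HasFDerivAt (fun w : ℂ × ℂ => (2 : ℂ)⁻¹ • (g₁ (w.1 - I * w.2) + g₂ (w.1 + I * w.2))) _ z at this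
      simpa [smul_eq_mul, div_eq_inv_mul] using this
    · have := (c1.sub c2).const_smul (I / 2)
      change HasFDerivAt (fun w : ℂ × ℂ => (I / 2) • (g₁ (w.1 - I * w.2) - g₂ (w.1 + I * w.2))) _ z at this
      have heq : (fun w : ℂ × ℂ => (I / 2) • (g₁ (w.1 - I * w.2) - g₂ (w.1 + I * w.2)))
          = fun w : ℂ × ℂ => I * (g₁ (w.1 - I * w.2) - g₂ (w.1 + I * w.2)) / 2 := by
        funext w; simp [smul_eq_mul]; ring
      rwa [heq] at this
  have hf1 : ∀ z : ℂ × ℂ, (fun w => (f w).1)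
      = fun w : ℂ × ℂ => (g₁ (w.1 - I * w.2) + g₂ (w.1 + I * w.2)) / 2 := fun _ => rfl
  have hf2 : ∀ z : ℂ × ℂ, (fun w => (f w).2)
      = fun w : ℂ × ℂ => I * (g₁ (w.1 - I * w.2) - g₂ (w.1 + I * w.2)) / 2 := fun _ => rfl
  have evals : ∀ z ∈ U,
      fderiv ℂ (fun w => (f w).1) z =
        (2 : ℂ)⁻¹ • ((deriv g₁ (z.1 - I * z.2)) • p₁ + (deriv g₂ (z.1 + I * z.2)) • p₂) ∧
      fderiv ℂ (fun w => (f w).2) z =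
        (I / 2) • ((deriv g₁ (z.1 - I * z.2)) • p₁ - (deriv g₂ (z.1 + I * z.2)) • p₂) := by
    intro z hz
    exact ⟨by rw [hf1 z]; exact ((key z hz).1).fderiv,
           by rw [hf2 z]; exact ((key z hz).2).fderiv⟩
  refine ⟨hU, ⟨?_, ?_⟩, ?_⟩
  · -- DifferentiableOn
    intro z hz
    have : DifferentiableAt ℂ f z := by
      have d1 := ((key z hz).1).differentiableAt
      have d2 := ((key z hz).2).differentiableAt
      exact (DifferentiableAt.prodMk d1 d2 : _)
    exact this.differentiableWithinAt
  · -- CR equations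
    intro z hz
    obtain ⟨e1, e2⟩ := evals z hz
    rw [e1, e2]
    simp only [ContinuousLinearMap.smul_apply, ContinuousLinearMap.add_apply,
      ContinuousLinearMap.sub_apply, ContinuousLinearMap.coe_smul', Pi.smul_apply]
    simp only [hp₁app, hp₂app, smul_eq_mul]
    norm_num
    constructor
    · linear_combination ((deriv g₁ (z.1 - I * z.2) + deriv g₂ (z.1 + I * z.2)) / 2) * Complex.I_sq
    · ring
  · intro z hz
    obtain ⟨e1, e2⟩ := evals z hz
    rw [e1, e2]
    simp only [ContinuousLinearMap.smul_apply, ContinuousLinearMap.add_apply,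
      ContinuousLinearMap.sub_apply]
    simp only [hp₁app, hp₂app, smul_eq_mul]
    norm_num
    constructor <;> ring
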